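/- Let v be a uniformly random unit vector in ℝ^q and B ∈ ℝ^{q×q} a skew-symmetric matrix with ‖B‖_F = 1. Then E[VᵀBV E₁₁ VᵀBᵀV] = (I − E₁₁)/(q(q−1)), where V is a Haar-distributed q×q orthogonal matrix and E₁₁ = e₁e₁ᵀ. -/

import Mathlib

open MeasureTheory Matrix Finset

/-- Matrices carry the (Borel) product measurable structure of `Fin n → Fin m → ℝ`. -/
instance matrixMeasurableSpace (n m : ℕ) : MeasurableSpace (Matrix (Fin n) (Fin m) ℝ) :=
  inferInstanceAs (MeasurableSpace (Fin n → Fin m → ℝ))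

namespace SkewAux

variable {q : ℕ}

abbrev M (q : ℕ) := Matrix (Fin q) (Fin q) ℝ

lemma meas_entry {α} [MeasurableSpace α] {f : α → M q} (hf : Measurable f) (i j : Fin q) :
    Measurable fun a => f a i j :=
  (measurable_pi_apply j).comp ((measurable_pi_apply i).comp hf)

lemma meas_matmul {α} [MeasurableSpace α] {f g : α → M q} (hf : Measurable f)
    (hg : Measurable g) : Measurable fun a => f a * g a := by
  apply measurable_pi_iff.2; intro i
  apply measurable_pi_iff.2; intro j
  simp only [Matrix.mul_apply]
  exact Finset.measurable_sum _ fun k _ => (meas_entry hf i k).mul (meas_entry hg k j)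

lemma meas_transpose {α} [MeasurableSpace α] {f : α → M q} (hf : Measurable f) :
    Measurable fun a => (f a)ᵀ := by
  apply measurable_pi_iff.2; intro i
  apply measurable_pi_iff.2; intro j
  simpa only [Matrix.transpose_apply] using meas_entry hf j i

lemma meas_transpose' : Measurable ((·ᵀ) : M q → M q) :=
  meas_transpose measurable_id

lemma measurableSet_orth : MeasurableSet {W : M q | Wᵀ * W = 1} := by
  have h : {W : M q | Wᵀ * W = 1} = (fun W : M q => Wᵀ * W) ⁻¹' {1} := rfl
  rw [h]
  haveI : MeasurableSingletonClass (M q) :=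
    inferInstanceAs (MeasurableSingletonClass (Fin q → Fin q → ℝ))
  exact (meas_matmul (meas_transpose measurable_id) measurable_id) (measurableSet_singleton 1)

section Invariance

variable (ν : Measure (M q)) [IsProbabilityMeasure ν]
  (horth : ∀ᵐ W ∂ν, Wᵀ * W = 1)
  (hleft : ∀ Q : M q, Qᵀ * Q = 1 → ν.map (Q * ·) = ν)

lemma meas_mul_left (Q : M q) : Measurable (Q * · : M q → M q) :=
  meas_matmul measurable_const measurable_id

lemma meas_mul_right (R : M q) : Measurable (· * R : M q → M q) :=
  meas_matmul measurable_id measurable_const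

include horth hleft in
lemma right_inv (R : M q) (hR : Rᵀ * R = 1) : ν.map (· * R) = ν := by
  set ν' : Measure (M q) := ν.map (·ᵀ) with hν'
  have stepA : ∀ R : M q, Rᵀ * R = 1 → ν'.map (· * R) = ν' := by
    intro R hR
    have h1 : ((· * R) ∘ (·ᵀ) : M q → M q) = (·ᵀ) ∘ ((Rᵀ * ·)) := by
      funext W; simp [Function.comp, Matrix.transpose_mul]
    rw [hν', Measure.map_map (meas_mul_right R) meas_transpose', h1,
      ← Measure.map_map meas_transpose' (meas_mul_left Rᵀ),
      hleft Rᵀ (by rw [Matrix.transpose_transpose]; exact mul_eq_one_comm.mp hR)]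
  have stepB : ν' = ν := by
    ext s hs
    set g : M q × M q → M q := fun p => p.1ᵀ * p.2 with hg
    have hgm : Measurable g :=
      meas_matmul (meas_transpose measurable_fst) measurable_snd
    have e1 : (ν.prod ν) (g ⁻¹' s) = ν s := by
      rw [Measure.prod_apply (hgm hs)]
      have hae : ∀ᵐ x ∂ν, ν (Prod.mk x ⁻¹' (g ⁻¹' s)) = ν s := by
        filter_upwards [horth] with x hx
        have hxo : (xᵀ)ᵀ * xᵀ = 1 := by
          rw [Matrix.transpose_transpose]; exact mul_eq_one_comm.mp hx
        have hpre : Prod.mk x ⁻¹' (g ⁻¹' s) = ((xᵀ * ·) : M q → M q) ⁻¹' s := rfl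
        rw [hpre, ← Measure.map_apply (meas_mul_left xᵀ) hs, hleft _ hxo]
      rw [lintegral_congr_ae hae, lintegral_const, measure_univ, mul_one]
    have e2 : (ν.prod ν) (g ⁻¹' s) = ν' s := by
      rw [Measure.prod_apply_symm (hgm hs)]
      have hae : ∀ᵐ y ∂ν, ν ((fun x => (x, y)) ⁻¹' (g ⁻¹' s)) = ν' s := by
        filter_upwards [horth] with y hy
        have hpre : (fun x => (x, y)) ⁻¹' (g ⁻¹' s)
            = ((·ᵀ) : M q → M q) ⁻¹' (((· * y) : M q → M q) ⁻¹' s) := rfl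
        have h2 : ν (((·ᵀ) : M q → M q) ⁻¹' (((· * y) : M q → M q) ⁻¹' s))
            = (ν'.map (· * y)) s := by
          rw [Measure.map_apply (meas_mul_right y) hs, hν',
            Measure.map_apply meas_transpose' ((meas_mul_right y) hs)]
        rw [hpre, h2, stepA y hy]
      rw [lintegral_congr_ae hae, lintegral_const, measure_univ, mul_one]
    rw [← e1, e2]
  calc ν.map (· * R) = ν'.map (· * R) := by rw [stepB]
    _ = ν' := stepA R hR
    _ = ν := stepB

include horth hleft in
lemma int_right {f : M q → ℝ} (hf : Measurable f) {R : M q} (hR : Rᵀ * R = 1) :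
    ∫ W, f (W * R) ∂ν = ∫ W, f W ∂ν := by
  have h := right_inv ν horth hleft R hR
  calc ∫ W, f (W * R) ∂ν = ∫ W, f W ∂(ν.map (· * R)) :=
        (integral_map (meas_mul_right R).aemeasurable
          (by rw [h]; exact hf.aestronglyMeasurable)).symm
    _ = ∫ W, f W ∂ν := by rw [h]

include hleft in
lemma int_left {f : M q → ℝ} (hf : Measurable f) {Q : M q} (hQ : Qᵀ * Q = 1) :
    ∫ W, f (Q * W) ∂ν = ∫ W, f W ∂ν := by
  have h := hleft Q hQ
  calc ∫ W, f (Q * W) ∂ν = ∫ W, f W ∂(ν.map (Q * ·)) :=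
        (integral_map (meas_mul_left Q).aemeasurable
          (by rw [h]; exact hf.aestronglyMeasurable)).symm
    _ = ∫ W, f W ∂ν := by rw [h]

end Invariance


namespace SkewAux2
variable {q : ℕ}
abbrev M (q : ℕ) := Matrix (Fin q) (Fin q) ℝ

lemma sandwich (S T : M q) (z a b : Fin q) :
    (S * Matrix.single z z (1:ℝ) * T) a b = S a z * T z b := by
  simp [Matrix.mul_apply, Matrix.single, ite_and, mul_ite, ite_mul,
    Finset.sum_ite_eq, Finset.sum_ite_eq']

lemma skew_diag {S : M q} (h : Sᵀ = -S) (c : Fin q) : S c c = 0 := by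
  have := congrFun (congrFun h c) c
  simp only [Matrix.transpose_apply, Matrix.neg_apply] at this
  linarith

lemma conj_skew {B : M q} (hB : Bᵀ = -B) (W : M q) (c : Fin q) : (Wᵀ * B * W) c c = 0 := by
  refine skew_diag ?_ c
  simp [Matrix.transpose_mul, hB, Matrix.mul_assoc, Matrix.mul_neg, Matrix.neg_mul]

lemma conj_F (B E R W : M q) (hRE : R * E * Rᵀ = E) :
    (W*R)ᵀ * B * (W*R) * E * (W*R)ᵀ * Bᵀ * (W*R)
      = Rᵀ * (Wᵀ * B * W * E * Wᵀ * Bᵀ * W) * R := by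
  have h : R * (E * Rᵀ) = E := by rw [← Matrix.mul_assoc]; exact hRE
  conv_rhs => rw [← h]
  simp only [Matrix.transpose_mul, Matrix.mul_assoc]

lemma diag_conj (d : Fin q → ℝ) (N : M q) (a b : Fin q) :
    ((diagonal d)ᵀ * N * diagonal d) a b = d a * N a b * d b := by
  rw [Matrix.diagonal_transpose, Matrix.mul_diagonal, Matrix.diagonal_mul]

lemma diag_orth (d : Fin q → ℝ) (hd : ∀ i, d i * d i = 1) :
    (diagonal d)ᵀ * diagonal d = 1 := by
  rw [Matrix.diagonal_transpose, Matrix.diagonal_mul_diagonal]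
  ext i j
  by_cases h : i = j <;> simp [Matrix.diagonal_apply, Matrix.one_apply, h, hd]

lemma diag_E (d : Fin q → ℝ) (hd : ∀ i, d i * d i = 1) (z : Fin q) :
    diagonal d * Matrix.single z z (1:ℝ) * (diagonal d)ᵀ = Matrix.single z z (1:ℝ) := by
  ext i j
  rw [Matrix.diagonal_transpose, Matrix.mul_diagonal, Matrix.diagonal_mul]
  by_cases h : z = i ∧ z = j
  · obtain ⟨h1, h2⟩ := h; subst h1; subst h2
    simp [Matrix.single, hd]
  · simp [Matrix.single, h]

/-- permutation matrix: row `i` has a `1` in column `σ i`. -/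
def P (σ : Equiv.Perm (Fin q)) : M q := Matrix.of fun i j => if σ i = j then (1:ℝ) else 0

lemma P_mul_entry (σ : Equiv.Perm (Fin q)) (W : M q) (i j : Fin q) :
    (P σ * W) i j = W (σ i) j := by
  simp [P, Matrix.mul_apply, ite_mul, Finset.sum_ite_eq]

lemma mul_Pt_entry (σ : Equiv.Perm (Fin q)) (N : M q) (i j : Fin q) :
    (N * (P σ)ᵀ) i j = N i (σ j) := by
  simp [P, Matrix.mul_apply, Matrix.transpose_apply, mul_ite, Finset.sum_ite_eq']

lemma Pt_mul_entry (σ : Equiv.Perm (Fin q)) (N : M q) (i j : Fin q) :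
    ((P σ)ᵀ * N) i j = N (σ.symm i) j := by
  simp [P, Matrix.mul_apply, Matrix.transpose_apply, ite_mul,
    Equiv.apply_eq_iff_eq_symm_apply, Finset.sum_ite_eq]

lemma mul_P_entry (σ : Equiv.Perm (Fin q)) (N : M q) (i j : Fin q) :
    (N * P σ) i j = N i (σ.symm j) := by
  simp [P, Matrix.mul_apply, mul_ite, Equiv.apply_eq_iff_eq_symm_apply, Finset.sum_ite_eq']

lemma P_orth (σ : Equiv.Perm (Fin q)) : (P σ)ᵀ * P σ = 1 := by
  ext i j
  rw [Pt_mul_entry]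
  simp [P, Matrix.one_apply, Equiv.apply_eq_iff_eq_symm_apply, eq_comm]

lemma P_conj_entry (σ : Equiv.Perm (Fin q)) (N : M q) (a b : Fin q) :
    ((P σ)ᵀ * N * P σ) a b = N (σ.symm a) (σ.symm b) := by
  rw [mul_P_entry, Pt_mul_entry]

lemma P_E (σ : Equiv.Perm (Fin q)) (z : Fin q) (hz : σ z = z) :
    P σ * Matrix.single z z (1:ℝ) * (P σ)ᵀ = Matrix.single z z (1:ℝ) := by
  ext i j
  rw [mul_Pt_entry, P_mul_entry]
  have h1 : ∀ c : Fin q, (z = σ c) ↔ (z = c) := by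
    intro c
    exact ⟨fun h => σ.injective (hz.trans h), fun h => by subst h; exact hz.symm⟩
  simp [Matrix.single, h1]

end SkewAux2

namespace SkewAux3
variable {q : ℕ}
abbrev M (q : ℕ) := Matrix (Fin q) (Fin q) ℝ

lemma abs_le_one_of_sum {f : Fin q → ℝ} (h : ∑ k, f k * f k = 1) (i : Fin q) : |f i| ≤ 1 :=
  abs_le_one_iff_mul_self_le_one.2
    (h ▸ Finset.single_le_sum (fun k _ => mul_self_nonneg (f k)) (mem_univ i))

lemma entry_le_of_orth {W : M q} (h : Wᵀ * W = 1) (i j : Fin q) : |W i j| ≤ 1 := by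
  have hj : ∑ k, W k j * W k j = 1 := by
    have := congrFun (congrFun h j) j
    simpa [Matrix.mul_apply, Matrix.one_apply, Matrix.transpose_apply] using this
  exact abs_le_one_of_sum hj i

lemma entry_le_of_trace {B : M q} (h : Matrix.trace (Bᵀ * B) = 1) (i j : Fin q) : |B i j| ≤ 1 := by
  have htr : ∑ j' : Fin q, ∑ k : Fin q, B k j' * B k j' = 1 := by
    simpa [Matrix.trace, Matrix.diag, Matrix.mul_apply, Matrix.transpose_apply] using h
  have h1 : B i j * B i j ≤ ∑ k, B k j * B k j :=
    Finset.single_le_sum (fun k _ => mul_self_nonneg (B k j)) (mem_univ i)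
  have h2 : ∑ k, B k j * B k j ≤ 1 := by
    rw [← htr]
    exact Finset.single_le_sum
      (fun j' _ => Finset.sum_nonneg fun k _ => mul_self_nonneg (B k j')) (mem_univ j)
  exact abs_le_one_iff_mul_self_le_one.2 (le_trans h1 h2)

lemma mul_bound {A A' : M q} {c c' : ℝ} (hc : 0 ≤ c) (hA : ∀ i j, |A i j| ≤ c)
    (hA' : ∀ i j, |A' i j| ≤ c') : ∀ i j, |(A * A') i j| ≤ (q : ℝ) * (c * c') := by
  intro i j
  rw [Matrix.mul_apply]
  calc |∑ k, A i k * A' k j| ≤ ∑ k, |A i k * A' k j| := Finset.abs_sum_le_sum_abs _ _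
    _ ≤ ∑ _k : Fin q, c * c' := Finset.sum_le_sum fun k _ => by
        rw [abs_mul]; exact mul_le_mul (hA i k) (hA' k j) (abs_nonneg _) hc
    _ = (q : ℝ) * (c * c') := by
        simp [Finset.sum_const, Finset.card_univ]

lemma stdBasis_entry_le (z i j : Fin q) : |Matrix.single z z (1:ℝ) i j| ≤ 1 := by
  by_cases h : z = i ∧ z = j <;> simp only [Matrix.single, Matrix.of_apply, h,
    if_true, if_false, abs_one, abs_zero, le_refl, zero_le_one, if_pos, if_neg, not_false_iff]
  · obtain ⟨h1, h2⟩ := h; subst h1; subst h2; simp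

lemma F_entry_bound {B W : M q} (z : Fin q) (hW : Wᵀ * W = 1)
    (hB : Matrix.trace (Bᵀ * B) = 1) (a b : Fin q) :
    |(Wᵀ * B * W * Matrix.single z z (1:ℝ) * Wᵀ * Bᵀ * W) a b| ≤ (q:ℝ)^6 := by
  have hq0 : (0:ℝ) ≤ (q:ℝ) := Nat.cast_nonneg q
  have hWt : ∀ i j, |Wᵀ i j| ≤ 1 := fun i j => entry_le_of_orth hW j i
  have hBe : ∀ i j, |B i j| ≤ 1 := entry_le_of_trace hB
  have hBt : ∀ i j, |Bᵀ i j| ≤ 1 := fun i j => entry_le_of_trace hB j i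
  have hWe : ∀ i j, |W i j| ≤ 1 := entry_le_of_orth hW
  have h1 : ∀ i j, |(Wᵀ * B) i j| ≤ (q:ℝ) * (1 * 1) := mul_bound zero_le_one hWt hBe
  have h2 : ∀ i j, |(Wᵀ * B * W) i j| ≤ (q:ℝ) * (((q:ℝ) * (1*1)) * 1) :=
    mul_bound (by positivity) h1 hWe
  have h3 := mul_bound (c' := 1) (by positivity) h2 (stdBasis_entry_le z)
  have h4 := mul_bound (c' := 1) (by positivity) h3 hWt
  have h5 := mul_bound (c' := 1) (by positivity) h4 hBt
  have h6 := mul_bound (c' := 1) (by positivity) h5 hWe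
  have := h6 a b
  calc |(Wᵀ * B * W * Matrix.single z z (1:ℝ) * Wᵀ * Bᵀ * W) a b|
      ≤ _ := this
    _ ≤ (q:ℝ)^6 := by ring_nf; rfl

end SkewAux3

namespace SkewMain
open SkewAux SkewAux2 SkewAux3

variable {q : ℕ}
abbrev M (q : ℕ) := Matrix (Fin q) (Fin q) ℝ

theorem main_nu (hq : 2 ≤ q) (ν : Measure (M q)) [IsProbabilityMeasure ν]
    (horth : ∀ᵐ W ∂ν, Wᵀ * W = 1)
    (hleft : ∀ Q : M q, Qᵀ * Q = 1 → ν.map (Q * ·) = ν)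
    (B : M q) (hBskew : Bᵀ = -B) (hBnorm : Matrix.trace (Bᵀ * B) = 1)
    (z : Fin q) (a b : Fin q) :
    ∫ W, (Wᵀ * B * W * Matrix.single z z (1:ℝ) * Wᵀ * Bᵀ * W) a b ∂ν
      = ((1 : M q) - Matrix.single z z (1:ℝ)) a b / ((q:ℝ) * ((q:ℝ) - 1)) := by
  set E : M q := Matrix.single z z (1:ℝ) with hE
  set F : M q → M q := fun W => Wᵀ * B * W * E * Wᵀ * Bᵀ * W with hF
  -- measurability
  have hFmeasM : Measurable F :=
    meas_matmul (meas_matmul (meas_matmul (meas_matmul (meas_matmul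
      (meas_matmul (meas_transpose measurable_id) measurable_const) measurable_id)
      measurable_const) (meas_transpose measurable_id)) measurable_const) measurable_id
  have hFmeas : ∀ i j : Fin q, Measurable fun W => F W i j := fun i j => meas_entry hFmeasM i j
  -- decomposition of entries of F
  have hFdecomp : ∀ W : M q, ∀ i j : Fin q,
      F W i j = (Wᵀ * B * W) i z * (Wᵀ * Bᵀ * W) z j := by
    intro W i j
    have h : F W = (Wᵀ * B * W) * E * (Wᵀ * Bᵀ * W) := by
      rw [hF]; simp only [Matrix.mul_assoc]
    rw [h, hE, sandwich]
  -- (1,1)-entry vanishes identically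
  have hFzz : ∀ W : M q, F W z z = 0 := by
    intro W
    rw [hFdecomp W z z, conj_skew hBskew, zero_mul]
  -- off-diagonal entries integrate to zero
  have hoff : ∀ a b : Fin q, a ≠ b → ∫ W, F W a b ∂ν = 0 := by
    intro a b hab
    set d : Fin q → ℝ := fun c => if c = a then -1 else 1 with hd'
    have hd : ∀ c, d c * d c = 1 := by
      intro c; by_cases h : c = a <;> simp [hd', h]
    have h2 : ∀ W : M q, F (W * diagonal d) a b = - F W a b := by
      intro W
      have : F (W * diagonal d) = (diagonal d)ᵀ * F W * diagonal d := by
        rw [hF]; exact conj_F B E (diagonal d) W (diag_E d hd z)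
      rw [this, diag_conj]
      have hda : d a = -1 := by simp [hd']
      have hdb : d b = 1 := by simp [hd', hab.symm]
      rw [hda, hdb]; ring
    have h1 : ∫ W, F (W * diagonal d) a b ∂ν = ∫ W, F W a b ∂ν :=
      int_right ν horth hleft (hFmeas a b) (diag_orth d hd)
    simp only [h2, integral_neg] at h1
    linarith
  -- diagonal entries (away from z) all agree
  have hswap : ∀ a : Fin q, a ≠ z → ∀ b : Fin q, b ≠ z →
      ∫ W, F W a a ∂ν = ∫ W, F W b b ∂ν := by
    intro a ha b hb
    rcases eq_or_ne a b with rfl | hab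
    · rfl
    set σ : Equiv.Perm (Fin q) := Equiv.swap a b with hσ
    have hσz : σ z = z := Equiv.swap_apply_of_ne_of_ne (Ne.symm ha) (Ne.symm hb)
    have h2 : ∀ W : M q, F (W * P σ) a a = F W b b := by
      intro W
      have : F (W * P σ) = (P σ)ᵀ * F W * P σ := by
        rw [hF]; exact conj_F B E (P σ) W (P_E σ z hσz)
      rw [this, P_conj_entry]
      have : σ.symm a = b := by rw [hσ]; simp [Equiv.symm_swap, Equiv.swap_apply_left]
      rw [this]
    have h1 : ∫ W, F (W * P σ) a a ∂ν = ∫ W, F W a a ∂ν :=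
      int_right ν horth hleft (hFmeas a a) (P_orth σ)
    simp only [h2] at h1
    exact h1.symm
  -- second moments of a column
  have hKmeas : ∀ i j : Fin q, Measurable fun W : M q => W i z * W j z := fun i j =>
    (meas_entry measurable_id i z).mul (meas_entry measurable_id j z)
  have hKint : ∀ i j : Fin q, Integrable (fun W : M q => W i z * W j z) ν := by
    intro i j
    refine ⟨(hKmeas i j).aestronglyMeasurable, HasFiniteIntegral.of_bounded (C := 1) ?_⟩
    filter_upwards [horth] with W hW
    rw [Real.norm_eq_abs, abs_mul]
    exact mul_le_one₀ (entry_le_of_orth hW i z) (abs_nonneg _) (entry_le_of_orth hW j z)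
  have hKoff : ∀ i j : Fin q, i ≠ j → ∫ W, W i z * W j z ∂ν = 0 := by
    intro i j hij
    set d : Fin q → ℝ := fun c => if c = i then -1 else 1 with hd'
    have hd : ∀ c, d c * d c = 1 := by
      intro c; by_cases h : c = i <;> simp [hd', h]
    have hDo : (diagonal d)ᵀ * diagonal d = 1 := diag_orth d hd
    have h2 : ∀ W : M q, (diagonal d * W) i z * (diagonal d * W) j z = -(W i z * W j z) := by
      intro W
      rw [Matrix.diagonal_mul, Matrix.diagonal_mul]
      have hdi : d i = -1 := by simp [hd']
      have hdj : d j = 1 := by simp [hd', hij.symm]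
      rw [hdi, hdj]; ring
    have h1 : ∫ W, (diagonal d * W) i z * (diagonal d * W) j z ∂ν
        = ∫ W, W i z * W j z ∂ν := int_left ν hleft (hKmeas i j) hDo
    simp only [h2, integral_neg] at h1
    linarith
  have hKdiag_eq : ∀ i j : Fin q, ∫ W, W i z * W i z ∂ν = ∫ W, W j z * W j z ∂ν := by
    intro i j
    rcases eq_or_ne i j with rfl | hij
    · rfl
    set σ : Equiv.Perm (Fin q) := Equiv.swap i j with hσ
    have h2 : ∀ W : M q, (P σ * W) i z * (P σ * W) i z = W j z * W j z := by
      intro W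
      rw [P_mul_entry, hσ, Equiv.swap_apply_left]
    have h1 : ∫ W, (P σ * W) i z * (P σ * W) i z ∂ν
        = ∫ W, W i z * W i z ∂ν := int_left ν hleft (hKmeas i i) (P_orth σ)
    simp only [h2] at h1
    exact h1.symm
  have hq0 : (q:ℝ) ≠ 0 := by positivity
  have hKdiag : ∀ i : Fin q, ∫ W, W i z * W i z ∂ν = 1 / (q:ℝ) := by
    intro i
    have hsum : ∑ j : Fin q, ∫ W, W j z * W j z ∂ν = 1 := by
      rw [← integral_finset_sum univ (fun j _ => hKint j j)]
      have hae : ∀ᵐ W ∂ν, ∑ j : Fin q, W j z * W j z = 1 := by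
        filter_upwards [horth] with W hW
        have := congrFun (congrFun hW z) z
        simpa [Matrix.mul_apply, Matrix.one_apply, Matrix.transpose_apply] using this
      rw [integral_congr_ae hae]
      simp
    have hconst : ∑ j : Fin q, ∫ W, W j z * W j z ∂ν
        = (q:ℝ) * ∫ W, W i z * W i z ∂ν := by
      rw [Finset.sum_congr rfl fun j _ => hKdiag_eq j i]
      simp [Finset.sum_const, Finset.card_univ, mul_comm]
    rw [hconst] at hsum
    rw [eq_div_iff hq0]
    linear_combination hsum
  -- integrability of diagonal entries of F
  have hFint : ∀ c : Fin q, Integrable (fun W => F W c c) ν := by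
    intro c
    refine ⟨(hFmeas c c).aestronglyMeasurable, HasFiniteIntegral.of_bounded (C := (q:ℝ)^6) ?_⟩
    filter_upwards [horth] with W hW
    rw [Real.norm_eq_abs]
    exact F_entry_bound z hW hBnorm c c
  -- the trace identity
  have htrace : ∑ c : Fin q, ∫ W, F W c c ∂ν = 1 / (q:ℝ) := by
    rw [← integral_finset_sum univ (fun c _ => hFint c)]
    have hae : ∀ᵐ W ∂ν, ∑ c : Fin q, F W c c
        = ∑ i : Fin q, ∑ j : Fin q, (Bᵀ * B) i j * (W i z * W j z) := by
      filter_upwards [horth] with W hW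
      have hWWt : W * Wᵀ = 1 := mul_eq_one_comm.mp hW
      have step1 : ∑ c : Fin q, F W c c
          = ((Wᵀ * Bᵀ * W) * (Wᵀ * B * W)) z z := by
        rw [Matrix.mul_apply]
        exact Finset.sum_congr rfl fun c _ => by rw [hFdecomp W c c]; ring
      have step3 : (Wᵀ * Bᵀ * W) * (Wᵀ * B * W) = Wᵀ * (Bᵀ * B) * W := by
        have h : W * (Wᵀ * (B * W)) = B * W := by
          rw [← Matrix.mul_assoc, hWWt, Matrix.one_mul]
        simp only [Matrix.mul_assoc, h]
      have step4 : (Wᵀ * (Bᵀ * B) * W) z z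
          = ∑ i : Fin q, ∑ j : Fin q, (Bᵀ * B) i j * (W i z * W j z) := by
        simp only [Matrix.mul_apply, Matrix.transpose_apply, Finset.sum_mul]
        rw [Finset.sum_comm]
        refine Finset.sum_congr rfl fun i _ => Finset.sum_congr rfl fun j _ => ?_
        rw [Finset.mul_sum, Finset.sum_mul]
        exact Finset.sum_congr rfl fun x _ => by ring
      rw [step1, step3, step4]
    rw [integral_congr_ae hae]
    rw [integral_finset_sum univ (f := fun i (W : M q) => ∑ j : Fin q, (Bᵀ * B) i j * (W i z * W j z))
      (fun i _ => integrable_finset_sum _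
      (fun j _ => (hKint i j).const_mul _))]
    have : ∀ i : Fin q, ∫ W, ∑ j : Fin q, (Bᵀ * B) i j * (W i z * W j z) ∂ν
        = (Bᵀ * B) i i * (1 / (q:ℝ)) := by
      intro i
      rw [integral_finset_sum univ (fun j _ => (hKint i j).const_mul _)]
      rw [Finset.sum_eq_single i]
      · rw [integral_const_mul, hKdiag i]
      · intro j _ hji
        rw [integral_const_mul, hKoff i j (Ne.symm hji), mul_zero]
      · intro h; exact absurd (mem_univ i) h
    rw [Finset.sum_congr rfl fun i _ => this i]
    rw [← Finset.sum_mul]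
    have hBtr : ∑ i : Fin q, (Bᵀ * B) i i = 1 := by
      simpa [Matrix.trace, Matrix.diag] using hBnorm
    rw [hBtr, one_mul]
  -- final assembly
  have hq1 : (q:ℝ) - 1 ≠ 0 := by
    have : (2:ℝ) ≤ (q:ℝ) := by exact_mod_cast hq
    linarith
  have key : ∫ W, F W a b ∂ν = ((1 : M q) - E) a b / ((q:ℝ) * ((q:ℝ) - 1)) := by
    rcases eq_or_ne a b with rfl | hab
    · rcases eq_or_ne a z with rfl | haz
      · have hL : ∫ W, F W a a ∂ν = 0 := by simp [hFzz]
        rw [hL]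
        have hEa : ((1 : M q) - E) a a = 0 := by
          simp [hE, Matrix.sub_apply, Matrix.one_apply_eq, Matrix.single_apply_same]
        rw [hEa, zero_div]
      · have hsplit : ∑ c : Fin q, ∫ W, F W c c ∂ν
            = (∫ W, F W z z ∂ν) + ∑ c ∈ univ.erase z, ∫ W, F W c c ∂ν :=
          (Finset.add_sum_erase univ _ (mem_univ z)).symm
        have hz0 : ∫ W, F W z z ∂ν = 0 := by simp [hFzz]
        have hconst : ∑ c ∈ univ.erase z, ∫ W, F W c c ∂ν
            = ((q:ℝ) - 1) * ∫ W, F W a a ∂ν := by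
          rw [Finset.sum_congr rfl (fun c hc => hswap c (Finset.ne_of_mem_erase hc) a haz)]
          rw [Finset.sum_const, Finset.card_erase_of_mem (mem_univ z), Finset.card_univ,
            Fintype.card_fin, nsmul_eq_mul]
          have h1q : (1:ℕ) ≤ q := by omega
          rw [Nat.cast_sub h1q, Nat.cast_one]
        rw [hsplit, hz0, hconst, zero_add] at htrace
        have h2 : (q:ℝ) * (((q:ℝ) - 1) * (∫ W, F W a a ∂ν)) = 1 := by
          rw [htrace]; field_simp
        have h3 : (∫ W, F W a a ∂ν) * ((q:ℝ) * ((q:ℝ) - 1)) = 1 := by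
          linear_combination h2
        have hEa : ((1 : M q) - E) a a = 1 := by
          have hza : z ≠ a := Ne.symm haz
          simp [hE, Matrix.sub_apply, Matrix.one_apply_eq, Matrix.single, hza]
        rw [hEa, eq_div_iff (mul_ne_zero hq0 hq1)]
        exact h3
    · rw [hoff a b hab]
      have hEab : E a b = 0 := by
        rw [hE]
        simp only [Matrix.single, Matrix.of_apply, ite_eq_right_iff]
        rintro ⟨h1, h2⟩
        exact absurd (h1.symm.trans h2) hab
      have hEa : ((1 : M q) - E) a b = 0 := by
        simp [Matrix.sub_apply, Matrix.one_apply_ne hab, hEab]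
      rw [hEa, zero_div]
  exact key

end SkewMain

end SkewAux



/-- Let `V` be a Haar-distributed `q×q` orthogonal matrix (`q ≥ 2`), characterized by being
almost surely orthogonal with law invariant under left multiplication by any orthogonal
matrix, and let `B ∈ ℝ^{q×q}` be skew-symmetric with `‖B‖_F = 1`.  Then
`E[Vᵀ B V E₁₁ Vᵀ Bᵀ V] = (I − E₁₁)/(q(q−1))`, where `E₁₁ = e₁e₁ᵀ`. -/
theorem skew_conjugation_expectation (q : ℕ) (hq : 2 ≤ q)
    (Ω : Type*) [MeasurableSpace Ω] (μ : Measure Ω) [IsProbabilityMeasure μ]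
    (V : Ω → Matrix (Fin q) (Fin q) ℝ) (hVmeas : Measurable V)
    (hVorth : ∀ᵐ ω ∂μ, (V ω)ᵀ * V ω = 1)
    (hVinv : ∀ Q : Matrix (Fin q) (Fin q) ℝ, Qᵀ * Q = 1 →
      Measure.map (fun ω => Q * V ω) μ = Measure.map V μ)
    (B : Matrix (Fin q) (Fin q) ℝ) (hBskew : Bᵀ = -B)
    (hBnorm : Matrix.trace (Bᵀ * B) = 1) :
    ∀ a b : Fin q,
      ∫ ω, (((V ω)ᵀ * B * V ω *
          Matrix.single (⟨0, by omega⟩ : Fin q) (⟨0, by omega⟩ : Fin q) (1 : ℝ) *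
          (V ω)ᵀ * Bᵀ * V ω : Matrix (Fin q) (Fin q) ℝ)) a b ∂μ =
        (((1 : Matrix (Fin q) (Fin q) ℝ) -
            Matrix.single (⟨0, by omega⟩ : Fin q) (⟨0, by omega⟩ : Fin q) (1 : ℝ)
          : Matrix (Fin q) (Fin q) ℝ)) a b /
          ((q : ℝ) * ((q : ℝ) - 1)) := by
  intro a b
  have hq0 : 0 < q := by omega
  set z : Fin q := ⟨0, hq0⟩ with hz
  set ν : Measure (SkewAux.M q) := μ.map V with hν
  haveI : IsProbabilityMeasure ν := Measure.isProbabilityMeasure_map hVmeas.aemeasurable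
  have horth : ∀ᵐ W ∂ν, Wᵀ * W = 1 :=
    (MeasureTheory.ae_map_iff hVmeas.aemeasurable SkewAux.measurableSet_orth).2 hVorth
  have hleft : ∀ Q : SkewAux.M q, Qᵀ * Q = 1 → ν.map (Q * ·) = ν := by
    intro Q hQ
    rw [hν, Measure.map_map (SkewAux.meas_mul_left Q) hVmeas]
    exact hVinv Q hQ
  have main := SkewAux.SkewMain.main_nu hq ν horth hleft B hBskew hBnorm z a b
  have hm : Measurable fun W : SkewAux.M q =>
      (Wᵀ * B * W * Matrix.single z z (1:ℝ) * Wᵀ * Bᵀ * W) a b :=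
    SkewAux.meas_entry
      (SkewAux.meas_matmul (SkewAux.meas_matmul (SkewAux.meas_matmul (SkewAux.meas_matmul
        (SkewAux.meas_matmul (SkewAux.meas_matmul (SkewAux.meas_transpose measurable_id)
          measurable_const) measurable_id) measurable_const)
        (SkewAux.meas_transpose measurable_id)) measurable_const) measurable_id) a b
  rw [hν, integral_map hVmeas.aemeasurable (by rw [← hν]; exact hm.aestronglyMeasurable)] at main
  exact main
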